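/- Let a > b ≥ 1 be integers and Λ_{a,b} = {(m,s) ∈ ℤ² : m > 0, s > 0, (a/b)·m < a − s ≤ ((a−1)/b)·m + 1}. Then the cardinality of Λ_{a,b} equals (b + gcd(a−1, b) − gcd(a, b) − 1)/2. -/

import Mathlib

def Lam (a b : ℤ) : Set (ℤ × ℤ) :=
  {p | 0 < p.1 ∧ 0 < p.2 ∧
    (a : ℚ) / b * p.1 < (a : ℚ) - p.2 ∧
    (a : ℚ) - p.2 ≤ ((a : ℚ) - 1) / b * p.1 + 1}

lemma mem_Lam_iff (a b m s : ℤ) (hb : 1 ≤ b) (hab : b < a) :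
    (m, s) ∈ Lam a b ↔ (0 < m ∧ m < b) ∧ a*m/b < a - s ∧ a - s ≤ (a-1)*m/b + 1 := by
  have hb0 : (0:ℤ) < b := hb
  have hbQ : (0:ℚ) < (b:ℚ) := by exact_mod_cast hb0
  have ha2 : 2 ≤ a := by omega
  simp only [Lam, Set.mem_setOf_eq]
  have key1 : ((a:ℚ)/b*m < (a:ℚ) - s) ↔ a*m < (a-s)*b := by
    rw [div_mul_eq_mul_div, div_lt_iff₀ hbQ]
    constructor <;> intro h <;> exact_mod_cast h
  have key2 : ((a:ℚ) - s ≤ ((a:ℚ)-1)/b*m + 1) ↔ (a-s-1)*b ≤ (a-1)*m := by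
    rw [div_mul_eq_mul_div, ← sub_le_iff_le_add, le_div_iff₀ hbQ]
    constructor <;> intro h <;> exact_mod_cast h
  have d1 : a*m < (a-s)*b ↔ a*m/b < a - s := (Int.ediv_lt_iff_lt_mul hb0).symm
  have d2 : (a-s-1)*b ≤ (a-1)*m ↔ a-s-1 ≤ (a-1)*m/b := (Int.le_ediv_iff_mul_le hb0).symm
  constructor
  · rintro ⟨hm, hs, h1, h2⟩
    rw [key1] at h1; rw [key2] at h2
    have e1 : (a-1)*m + m = a*m := by ring
    have e2 : (a-s-1)*b + b = (a-s)*b := by ring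
    have hmb : m < b := by linarith
    have := d2.mp h2
    exact ⟨⟨hm, hmb⟩, d1.mp h1, by omega⟩
  · rintro ⟨⟨hm, hmb⟩, h1, h2⟩
    have hub : (a-1)*m/b ≤ a - 2 := by
      have h3 : (a-1)*m ≤ (b-1) + (a-2)*b := by
        nlinarith [mul_le_mul_of_nonneg_left (show m ≤ b-1 by omega)
          (show (0:ℤ) ≤ a-1 by omega)]
      have h4 : ((b-1) + (a-2)*b)/b = a-2 := by
        rw [Int.add_mul_ediv_right _ _ (by omega : b ≠ 0),
          Int.ediv_eq_zero_of_lt (by omega) (by omega), zero_add]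
      calc (a-1)*m/b ≤ ((b-1)+(a-2)*b)/b := Int.ediv_le_ediv hb0 h3
        _ = a-2 := h4
    have hs : 0 < s := by omega
    exact ⟨hm, hs, key1.mpr (d1.mpr h1), key2.mpr (d2.mpr (by omega))⟩

lemma ediv_pair (b c m : ℤ) (hb : 0 < b) (hm : 0 < m) (hmb : m < b) :
    c*m/b + c*(b-m)/b = c - 1 + (if b ∣ c*m then 1 else 0) := by
  have hbne : b ≠ 0 := by omega
  by_cases hd : b ∣ c*m
  · rw [if_pos hd]
    obtain ⟨k, hk⟩ := hd
    have h1 : c*m/b = k := by rw [hk, Int.mul_ediv_cancel_left _ hbne]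
    have h2 : c*(b-m) = (0:ℤ) + b*(c-k) := by linear_combination -hk
    rw [h1, h2, Int.add_mul_ediv_left _ _ hbne]
    simp
  · rw [if_neg hd]
    have hqr := Int.mul_ediv_add_emod (c*m) b
    have hr0 : c*m % b ≠ 0 := fun h => hd (Int.dvd_iff_emod_eq_zero.mpr h)
    have hrpos : 0 ≤ c*m % b := Int.emod_nonneg _ hbne
    have hrlt : c*m % b < b := Int.emod_lt_of_pos _ hb
    have h2 : c*(b-m) = (b - c*m % b) + b*(c - c*m/b - 1) := by linear_combination hqr
    have hz : (b - c*m % b)/b = 0 := Int.ediv_eq_zero_of_lt (by omega) (by omega)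
    rw [h2, Int.add_mul_ediv_left _ _ hbne, hz]
    omega


lemma count_dvd (b c : ℤ) (hb : 0 < b) (hc : 0 < c) :
    ∑ m ∈ Finset.Ioo (0:ℤ) b, (if b ∣ c*m then (1:ℤ) else 0)
      = (Int.gcd c b : ℤ) - 1 := by
  set d : ℤ := (Int.gcd c b : ℤ) with hdd
  have hgcdpos : 0 < Int.gcd c b := Int.gcd_pos_iff.mpr (Or.inl (by omega))
  have hdpos : 0 < d := by rw [hdd]; exact_mod_cast hgcdpos
  have hdne : d ≠ 0 := by omega
  obtain ⟨b', hb'⟩ : d ∣ b := Int.gcd_dvd_right c b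
  obtain ⟨c', hc'⟩ : d ∣ c := Int.gcd_dvd_left c b
  have hb'pos : 0 < b' := by nlinarith
  have hb'ne : b' ≠ 0 := by omega
  have hcop : IsCoprime c' b' := by
    rw [Int.isCoprime_iff_gcd_eq_one]
    have := Int.gcd_div_gcd_div_gcd (i := c) (j := b) hgcdpos
    rwa [← hdd, hc', Int.mul_ediv_cancel_left _ hdne, hb',
      Int.mul_ediv_cancel_left _ hdne] at this
  have key : ∀ m : ℤ, b ∣ c*m ↔ b' ∣ m := by
    intro m
    constructor
    · intro h
      have h2 : d * b' ∣ d * (c' * m) := by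
        rw [← hb']; convert h using 1; rw [hc']; ring
      have h3 : b' ∣ c' * m := (mul_dvd_mul_iff_left hdne).mp h2
      exact hcop.symm.dvd_of_dvd_mul_left h3
    · rintro ⟨k, rfl⟩
      exact ⟨c' * k, by rw [hc', hb']; ring⟩
  have hsum : ∑ m ∈ Finset.Ioo (0:ℤ) b, (if b ∣ c*m then (1:ℤ) else 0)
      = ∑ m ∈ Finset.Ioo (0:ℤ) b, (if b' ∣ m then (1:ℤ) else 0) := by
    refine Finset.sum_congr rfl fun m _ => ?_
    simp only [key m]
  rw [hsum, Finset.sum_boole]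
  have hcard : (Finset.filter (fun m => b' ∣ m) (Finset.Ioo (0:ℤ) b)).card
      = (Finset.Ioo (0:ℤ) d).card := by
    apply Finset.card_nbij' (i := fun m => m / b') (j := fun k => b' * k)
    · intro m hm
      simp only [Finset.mem_coe, Finset.mem_filter, Finset.mem_Ioo] at hm ⊢
      obtain ⟨⟨hm0, hmb⟩, k, rfl⟩ := hm
      rw [Int.mul_ediv_cancel_left _ hb'ne]
      constructor
      · nlinarith
      · nlinarith [hb'.symm]
    · intro k hk
      simp only [Finset.mem_coe, Finset.mem_filter, Finset.mem_Ioo] at hk ⊢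
      obtain ⟨hk0, hkd⟩ := hk
      refine ⟨⟨by nlinarith, by nlinarith [hb'.symm]⟩, ⟨k, rfl⟩⟩
    · intro m hm
      simp only [Finset.mem_coe, Finset.mem_filter] at hm
      exact Int.mul_ediv_cancel' hm.2
    · intro k _
      exact Int.mul_ediv_cancel_left _ hb'ne
  rw [hcard, Int.card_Ioo]
  push_cast [Int.toNat_of_nonneg (by omega : (0:ℤ) ≤ d - 0 - 1)]
  ring

theorem Lam_card (a b : ℤ) (hb : 1 ≤ b) (hab : b < a) :
    2 * ((Lam a b).ncard : ℤ) = b + (Int.gcd (a - 1) b : ℤ) - (Int.gcd a b : ℤ) - 1 := by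
  have hb0 : (0:ℤ) < b := hb
  have hbne : b ≠ 0 := by omega
  have ha2 : 2 ≤ a := by omega
  set S : Finset (ℤ × ℤ) := (Finset.Ioo (0:ℤ) b).biUnion
    (fun m => (Finset.Ioc (a*m/b) ((a-1)*m/b + 1)).image (fun t => (m, a - t))) with hS
  have hset : Lam a b = ↑S := by
    ext ⟨m, s⟩
    rw [mem_Lam_iff a b m s hb hab]
    simp only [hS, Finset.coe_biUnion, Set.mem_iUnion, Finset.mem_coe, Finset.mem_image,
      Finset.mem_Ioc, Finset.mem_Ioo]
    constructor
    · rintro ⟨⟨hm, hmb⟩, h1, h2⟩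
      exact ⟨m, ⟨hm, hmb⟩, a - s, ⟨h1, h2⟩, by rw [sub_sub_cancel]⟩
    · rintro ⟨m', ⟨hm', hm'b⟩, t, ⟨ht1, ht2⟩, heq⟩
      simp only [Prod.mk.injEq] at heq
      obtain ⟨rfl, rfl⟩ := heq
      exact ⟨⟨hm', hm'b⟩, by omega, by omega⟩
  have hdisj : ∀ x ∈ Finset.Ioo (0:ℤ) b, ∀ y ∈ Finset.Ioo (0:ℤ) b, x ≠ y →
      Disjoint ((Finset.Ioc (a*x/b) ((a-1)*x/b + 1)).image (fun t => (x, a - t)))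
        ((Finset.Ioc (a*y/b) ((a-1)*y/b + 1)).image (fun t => (y, a - t))) := by
    intro x _ y _ hxy
    rw [Finset.disjoint_left]
    rintro p hp1 hp2
    simp only [Finset.mem_image] at hp1 hp2
    obtain ⟨t1, _, h1⟩ := hp1
    obtain ⟨t2, _, h2⟩ := hp2
    exact hxy (congrArg Prod.fst (h1.trans h2.symm))
  have hcard : (S.card : ℤ) = ∑ m ∈ Finset.Ioo (0:ℤ) b, ((a-1)*m/b + 1 - a*m/b) := by
    rw [hS, Finset.card_biUnion hdisj, Nat.cast_sum]
    refine Finset.sum_congr rfl fun m hm => ?_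
    simp only [Finset.mem_Ioo] at hm
    have hinj : Function.Injective (fun t : ℤ => (m, a - t)) := by
      intro t1 t2 h
      simp only [Prod.mk.injEq, true_and] at h
      omega
    rw [Finset.card_image_of_injective _ hinj, Int.card_Ioc, Int.toNat_of_nonneg]
    have h5 : a*m ≤ (a-1)*m + 1*b := by nlinarith
    have h6 := Int.ediv_le_ediv hb0 h5
    rw [Int.add_mul_ediv_right _ _ hbne] at h6
    omega
  rw [hset, Set.ncard_coe_finset, hcard]
  have hrev : ∑ m ∈ Finset.Ioo (0:ℤ) b, ((a-1)*m/b + 1 - a*m/b)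
      = ∑ m ∈ Finset.Ioo (0:ℤ) b, ((a-1)*(b-m)/b + 1 - a*(b-m)/b) := by
    refine Finset.sum_nbij' (fun m => b - m) (fun m => b - m) ?_ ?_ ?_ ?_ ?_
    · intro x hx; simp only [Finset.mem_Ioo] at hx ⊢; omega
    · intro x hx; simp only [Finset.mem_Ioo] at hx ⊢; omega
    · intro x _; omega
    · intro x _; omega
    · intro x _; rw [sub_sub_cancel]
  have key : 2 * ∑ m ∈ Finset.Ioo (0:ℤ) b, ((a-1)*m/b + 1 - a*m/b)
      = ∑ m ∈ Finset.Ioo (0:ℤ) b, (1 + (if b ∣ (a-1)*m then (1:ℤ) else 0)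
          - (if b ∣ a*m then (1:ℤ) else 0)) := by
    rw [two_mul]
    nth_rewrite 2 [hrev]
    rw [← Finset.sum_add_distrib]
    refine Finset.sum_congr rfl fun m hm => ?_
    simp only [Finset.mem_Ioo] at hm
    have p1 := ediv_pair b a m hb0 hm.1 hm.2
    have p2 := ediv_pair b (a-1) m hb0 hm.1 hm.2
    split_ifs at p1 p2 ⊢ <;> omega
  rw [key]
  have e1 : ∑ m ∈ Finset.Ioo (0:ℤ) b, (1 + (if b ∣ (a-1)*m then (1:ℤ) else 0)
      - (if b ∣ a*m then (1:ℤ) else 0))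
      = ∑ m ∈ Finset.Ioo (0:ℤ) b, (1 + (if b ∣ (a-1)*m then (1:ℤ) else 0))
        - ∑ m ∈ Finset.Ioo (0:ℤ) b, (if b ∣ a*m then (1:ℤ) else 0) :=
    Finset.sum_sub_distrib _ _
  rw [e1, Finset.sum_add_distrib, count_dvd b (a-1) hb0 (by omega),
    count_dvd b a hb0 (by omega), Finset.sum_const, Int.card_Ioo]
  simp only [nsmul_eq_mul, mul_one]
  omega
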